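/- Let c ∈ ℝ⟨⟨X⟩⟩ be the series with ⟨c, ξ⟩ = 1 for every word ξ ∈ X*. Then for every word η ∈ X*, the antipode of the output feedback Hopf algebra satisfies (S a_{η x0})(c) = 0; equivalently, the coefficients of the antipode polynomial S a_{η x0} (as a polynomial in coordinate functions, evaluated as a character) sum to zero. -/

import Mathlib

open scoped TensorProduct

noncomputable section

namespace Paper

/-- Words over the alphabet `X = {x0, x1}`, encoded as lists over `Fin 2`
(`0` stands for the letter `x0` and `1` for the letter `x1`). -/
abbrev Word : Type := List (Fin 2)

/-- Formal power series `ℝ⟨⟨X⟩⟩`, given by their coefficient functions `η ↦ ⟨c,η⟩`. -/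
abbrev Series : Type := Word → ℝ

/-- The left shift `x_i⁻¹(c)`. -/
def lshift (i : Fin 2) (c : Series) : Series := fun w => c (i :: w)

/-- Left concatenation `x_i c` of the letter `x_i` onto every word of `c`. -/
def lconcat (i : Fin 2) (c : Series) : Series := fun w =>
  match w with
  | [] => 0
  | j :: v => if j = i then c v else 0

/-- Right concatenation `p x_i` of the letter `x_i` onto every word of `p`. -/
def rconcat {R : Type*} [Zero R] (i : Fin 2) (p : Word → R) : Word → R := fun w =>
  if w.getLast? = some i then p w.dropLast else 0

/-- The series of a single word. -/
def ind (η : Word) : Series := fun w => if w = η then 1 else 0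

/-- The empty word as a series, the unit `∅` (often written `1`). -/
def one : Series := ind []

/-- The shuffle product, defined coefficientwise by the recursion
`⟨c ⧢ d, ∅⟩ = ⟨c,∅⟩⟨d,∅⟩` and `⟨c ⧢ d, x_i w⟩ = ⟨x_i⁻¹(c) ⧢ d, w⟩ + ⟨c ⧢ x_i⁻¹(d), w⟩`,
which is the bilinear (and ultrametrically continuous) extension of the recursive
shuffle product of words. -/
def shuffleFn : Series → Series → Word → ℝ
  | c, d, [] => c [] * d []
  | c, d, i :: w => shuffleFn (lshift i c) d w + shuffleFn c (lshift i d) w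

/-- The shuffle product on `ℝ⟨⟨X⟩⟩`. -/
def sh (c d : Series) : Series := shuffleFn c d

/-- The map `φ_d(x_i)` for the modified composition product:
`φ_d(x0)(e) = x0 e` and `φ_d(x1)(e) = x1 e + x0 (d ⧢ e)`. -/
def phiLetter (d : Series) (i : Fin 2) (e : Series) : Series :=
  if i = 0 then lconcat 0 e else lconcat 1 e + lconcat 0 (sh d e)

/-- `φ_d(η)`, the algebra-homomorphism extension determined by
`φ_d(x_i η) = φ_d(x_i) ∘ φ_d(η)` and `φ_d(∅) = id`. -/
def phi (d : Series) : Word → Series → Series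
  | [], e => e
  | i :: η, e => phiLetter d i (phi d η e)

/-- The modified composition product `c ∘̃ d = Σ_η ⟨c,η⟩ φ_d(η)(1)`. -/
def mcomp (c d : Series) : Series := fun w => ∑' η : Word, c η * phi d η one w

/-- The map `ψ_d(x_i)` for the composition product:
`ψ_d(x0)(e) = x0 e` and `ψ_d(x1)(e) = x0 (d ⧢ e)`. -/
def psiLetter (d : Series) (i : Fin 2) (e : Series) : Series :=
  if i = 0 then lconcat 0 e else lconcat 0 (sh d e)

/-- `ψ_d(η)`, determined by `ψ_d(x_i η) = ψ_d(x_i) ∘ ψ_d(η)` and `ψ_d(∅) = id`. -/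
def psi (d : Series) : Word → Series → Series
  | [], e => e
  | i :: η, e => psiLetter d i (psi d η e)

/-- The composition product `c ∘ d = Σ_η ⟨c,η⟩ ψ_d(η)(1)`. -/
def comp (c d : Series) : Series := fun w => ∑' η : Word, c η * psi d η one w

/-- The group operation on `ℝ⟨⟨X_δ⟩⟩ = {δ + c}`, transported to the `c`-parts:
`c_δ ∘ d_δ = δ + (d + c ∘̃ d)`. -/
def gop (c d : Series) : Series := d + mcomp c d

/-- The Ferfera series `c = Σ_{k ≥ 0} k! x1^k`. -/
def ferfera : Series := fun w =>
  if w = List.replicate w.length (1 : Fin 2) then (Nat.factorial w.length : ℝ) else 0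

/-- The degree of a word, `deg(η) = 2|η|_{x0} + |η|_{x1} + 1`. -/
def degW (η : Word) : ℕ := 2 * η.count 0 + η.count 1 + 1

/-- The output feedback Hopf algebra `H`: the free unital commutative `ℝ`-algebra on the
coordinate functions `a_η`, realized as polynomials in commuting variables indexed by words. -/
abbrev H : Type := MvPolynomial Word ℝ

/-- The coordinate function `a_η`. -/
def aw (η : Word) : H := MvPolynomial.X η

/-- Character (pointwise) evaluation of elements of `H` at a series `c`:
`(a_{η₁} ⋯ a_{η_l})(c) = ⟨c,η₁⟩ ⋯ ⟨c,η_l⟩`, extended as an algebra map. -/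
def evalS (c : Series) : H →ₐ[ℝ] ℝ := MvPolynomial.aeval c

/-- Evaluation of `H ⊗ H` at a pair of series: `(p ⊗ q)(c,d) = p(c) q(d)`. -/
def evalPair (c d : Series) : H ⊗[ℝ] H →ₗ[ℝ] ℝ :=
  (LinearMap.mul' ℝ ℝ).comp (TensorProduct.map (evalS c).toLinearMap (evalS d).toLinearMap)

/-- The counit `ε` of `H`: `ε(a_η) = 0`, `ε(1) = 1`. -/
def counit : H →ₐ[ℝ] ℝ := evalS 0

/-- The defining property of the full coproduct `Δ` of the output feedback Hopf algebra:
`Δ a_η = Δ̃ a_η + 1 ⊗ a_η` where `Δ̃ a_η (c,d) = ⟨c ∘̃ d, η⟩`, i.e.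
`(Δ a_η)(c,d) = ⟨c ∘̃ d, η⟩ + ⟨d, η⟩` for all series `c, d`; `Δ` is an algebra morphism. -/
def IsFBCoproduct (Δ : H →ₐ[ℝ] (H ⊗[ℝ] H)) : Prop :=
  ∀ (η : Word) (c d : Series), evalPair c d (Δ (aw η)) = mcomp c d η + d η

/-- `S` is an antipode for the coproduct `Δ` (with counit `ε`):
`μ ∘ (S ⊗ id) ∘ Δ = 1·ε = μ ∘ (id ⊗ S) ∘ Δ`. -/
def IsAntipode (Δ : H →ₐ[ℝ] (H ⊗[ℝ] H)) (S : H →ₗ[ℝ] H) : Prop :=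
  (∀ p : H, LinearMap.mul' ℝ H (TensorProduct.map S LinearMap.id (Δ p)) = counit p • 1) ∧
  (∀ p : H, LinearMap.mul' ℝ H (TensorProduct.map LinearMap.id S (Δ p)) = counit p • 1)

/-- The right-augmentation operator `θ̃_i`, the derivation on `H` with `θ̃_i(a_η) = a_{η x_i}`. -/
def thetaR (i : Fin 2) : Derivation ℝ H H :=
  MvPolynomial.mkDerivation ℝ fun η => aw (η ++ [i])

/-- The left-augmentation operator `θ_i`, the derivation on `H` with `θ_i(a_η) = a_{x_i η}`. -/
def thetaL (i : Fin 2) : Derivation ℝ H H :=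
  MvPolynomial.mkDerivation ℝ fun η => aw (i :: η)

/-- The multiplication operator `κ_∅(h) = h · a_∅`. -/
def kappaE : H →ₗ[ℝ] H := LinearMap.mulRight ℝ (aw [])

/-- The shuffle coefficient `⟨ξ ⧢ ν, η⟩`. -/
def shCoeff (ξ ν η : Word) : ℝ := sh (ind ξ) (ind ν) η

/-- The finite set of words of length `n`. -/
def wordsLen (n : ℕ) : Finset Word :=
  (Finset.univ : Finset (Fin n → Fin 2)).image List.ofFn

/-- The deshuffle coproduct `Δ_⧢ a_η = Σ_{ξ,ν} ⟨ξ ⧢ ν, η⟩ a_ξ ⊗ a_ν`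
(the unique coproduct satisfying `Δ_⧢ a_∅ = a_∅ ⊗ a_∅` and the coderivation recursions
with respect to the augmentation operators). -/
def deshuffle (η : Word) : H ⊗[ℝ] H :=
  ∑ k ∈ Finset.range (η.length + 1), ∑ ξ ∈ wordsLen k, ∑ ν ∈ wordsLen (η.length - k),
    shCoeff ξ ν η • (aw ξ ⊗ₜ[ℝ] aw ν)

/-- Iterated integrals: `E_∅[u](t) = 1`, `E_{x_i η}[u](t) = ∫₀ᵗ u_i(s) E_η[u](s) ds`. -/
def E (u : Fin 2 → ℝ → ℝ) : Word → ℝ → ℝ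
  | [], _ => 1
  | i :: η, t => ∫ s in (0:ℝ)..t, u i s * E u η s

end Paper
namespace Paper

lemma sh_congr_right {c e e' : Series} (h : ∀ u, e u = e' u) (w : Word) :
    shuffleFn c e w = shuffleFn c e' w := by
  have : e = e' := funext h
  rw [this]

lemma sh_zero (c : Series) (w : Word) : shuffleFn c (fun _ => 0) w = 0 := by
  induction w generalizing c with
  | nil => simp [shuffleFn]
  | cons i v ih =>
    show shuffleFn (lshift i c) (fun _ => 0) v + shuffleFn c (lshift i (fun _ => 0)) v = 0
    rw [ih, show (lshift i fun _ => (0:ℝ)) = (fun _ => (0:ℝ)) from rfl, ih]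
    ring

lemma sh_sub (c f g : Series) (w : Word) :
    shuffleFn c f w - shuffleFn c g w = shuffleFn c (fun u => f u - g u) w := by
  induction w generalizing c f g with
  | nil => show c [] * f [] - c [] * g [] = c [] * (f [] - g []); ring
  | cons i v ih =>
    show shuffleFn (lshift i c) f v + shuffleFn c (lshift i f) v
        - (shuffleFn (lshift i c) g v + shuffleFn c (lshift i g) v)
        = shuffleFn (lshift i c) (fun u => f u - g u) v
          + shuffleFn c (lshift i (fun u => f u - g u)) v
    rw [show (lshift i fun u => f u - g u) = (fun u => lshift i f u - lshift i g u) from rfl,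
      ← ih, ← ih]
    ring

lemma sh_vanish {k : ℕ} {e : Series} (he : ∀ u : Word, u.length < k → e u = 0)
    (c : Series) (w : Word) (hw : w.length < k) : shuffleFn c e w = 0 := by
  induction w generalizing c e k with
  | nil => show c [] * e [] = 0; rw [he [] hw]; ring
  | cons i v ih =>
    show shuffleFn (lshift i c) e v + shuffleFn c (lshift i e) v = 0
    have h1 : shuffleFn (lshift i c) e v = 0 :=
      ih he _ (lt_trans (by simp) hw)
    have h2 : shuffleFn c (lshift i e) v = 0 := by
      rcases k with _ | k
      · omega
      · exact ih (k := k) (fun u hu => he (i :: u) (by simpa using Nat.succ_lt_succ hu)) _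
          (by simpa using hw)
    rw [h1, h2]; ring

lemma sh_min {e : Series} (c : Series) (w : Word)
    (he : ∀ u : Word, u.length < w.length → e u = 0) :
    shuffleFn c e w = c [] * e w := by
  induction w generalizing c e with
  | nil => rfl
  | cons i v ih =>
    show shuffleFn (lshift i c) e v + shuffleFn c (lshift i e) v = c [] * e (i :: v)
    have h1 : shuffleFn (lshift i c) e v = 0 :=
      sh_vanish (k := (i :: v).length) he _ _ (by simp)
    have h2 : shuffleFn c (lshift i e) v = c [] * (lshift i e) v :=
      ih c (fun u hu => he (i :: u) (by simpa using Nat.succ_lt_succ hu))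
    rw [h1, h2]
    show 0 + c [] * e (i :: v) = c [] * e (i :: v)
    ring

lemma rsh_sh (c e : Series) (i : Fin 2) (w : Word) :
    shuffleFn c e (w ++ [i]) =
      shuffleFn (fun u => c (u ++ [i])) e w + shuffleFn c (fun u => e (u ++ [i])) w := by
  induction w generalizing c e with
  | nil =>
    show shuffleFn (lshift i c) e [] + shuffleFn c (lshift i e) [] = _
    rfl
  | cons j v ih =>
    show shuffleFn (lshift j c) e (v ++ [i]) + shuffleFn c (lshift j e) (v ++ [i]) = _
    rw [ih, ih]
    show _ = (shuffleFn (lshift j fun u => c (u ++ [i])) e v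
        + shuffleFn (fun u => c (u ++ [i])) (lshift j e) v)
        + (shuffleFn (lshift j c) (fun u => e (u ++ [i])) v
        + shuffleFn c (lshift j fun u => e (u ++ [i])) v)
    have e1 : (lshift j fun u => c (u ++ [i])) = fun u => (lshift j c) (u ++ [i]) := rfl
    have e2 : (lshift j fun u => e (u ++ [i])) = fun u => (lshift j e) (u ++ [i]) := rfl
    rw [e1, e2]
    ring

end Paper
namespace Paper

lemma one_nil : one [] = 1 := by simp [one, ind]

lemma one_ne_nil {w : Word} (h : w ≠ []) : one w = 0 := by simp [one, ind, h]

lemma phi_vanish {k : ℕ} {e : Series} (he : ∀ u : Word, u.length < k → e u = 0)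
    (d : Series) (ξ : Word) : ∀ w : Word, w.length < k + ξ.length → phi d ξ e w = 0 := by
  induction ξ with
  | nil => intro w hw; exact he w (by simpa using hw)
  | cons i σ ih =>
    intro w hw
    show phiLetter d i (phi d σ e) w = 0
    set g := phi d σ e with hg
    unfold phiLetter
    match w with
    | [] =>
      fin_cases i <;> simp [lconcat]
    | j :: v =>
      have hv : v.length < k + σ.length := by simp at hw; omega
      have hgv : g v = 0 := ih v hv
      have hsh : sh d g v = 0 := sh_vanish (k := k + σ.length) ih d v hv
      fin_cases i <;> simp [lconcat, hgv, hsh]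

lemma phi_one_vanish (d : Series) (ξ w : Word) (hw : w.length < ξ.length) :
    phi d ξ one w = 0 :=
  phi_vanish (k := 0) (fun _ hu => absurd hu (by omega)) d ξ w (by simpa using hw)

lemma phi_one_nil (d : Series) (ξ : Word) : phi d ξ one [] = if ξ = [] then 1 else 0 := by
  cases ξ with
  | nil => simpa [phi] using one_nil
  | cons i σ => simpa using phi_one_vanish d (i :: σ) [] (by simp)

/-- The all-ones series. -/
def c1 : Series := fun _ => 1

/-- The dominance relation on letters. -/
def rel01 (i j : Fin 2) : Prop := i = 0 → j = 0

lemma phi_len_one (ξ w : Word) (hlen : ξ.length = w.length)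
    (hF : List.Forall₂ rel01 ξ w) : phi c1 ξ one w = 1 := by
  induction ξ generalizing w with
  | nil =>
    cases w with
    | nil => exact one_nil
    | cons j v => simp at hlen
  | cons i σ ih =>
    cases w with
    | nil => simp at hlen
    | cons j v =>
      have hl : σ.length = v.length := by simpa using hlen
      rcases (List.forall₂_cons.mp hF) with ⟨hij, hF'⟩
      have hgv : phi c1 σ one v = 1 := ih v hl hF'
      have hsh : sh c1 (phi c1 σ one) v = phi c1 σ one v := by
        have := sh_min (e := phi c1 σ one) c1 v
          (fun u hu => phi_one_vanish c1 σ u (by omega))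
        simpa [c1, sh] using this
      show phiLetter c1 i (phi c1 σ one) (j :: v) = 1
      unfold phiLetter
      fin_cases i <;> fin_cases j <;>
        simp_all [lconcat, rel01, sh, hgv, hsh]
lemma phi_len_zero (ξ w : Word) (hlen : ξ.length = w.length)
    (hF : ¬ List.Forall₂ rel01 ξ w) : phi c1 ξ one w = 0 := by
  induction ξ generalizing w with
  | nil =>
    cases w with
    | nil => exact absurd List.Forall₂.nil hF
    | cons j v => simp at hlen
  | cons i σ ih =>
    cases w with
    | nil => simp at hlen
    | cons j v =>
      have hl : σ.length = v.length := by simpa using hlen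
      have hsh : sh c1 (phi c1 σ one) v = phi c1 σ one v := by
        have := sh_min (e := phi c1 σ one) c1 v
          (fun u hu => phi_one_vanish c1 σ u (by omega))
        simpa [c1, sh] using this
      show phiLetter c1 i (phi c1 σ one) (j :: v) = 0
      unfold phiLetter
      by_cases hF' : List.Forall₂ rel01 σ v
      · have hij : ¬ rel01 i j := fun h => hF (List.forall₂_cons.mpr ⟨h, hF'⟩)
        have hi : i = 0 := by
          by_contra h
          exact hij (fun h0 => absurd h0 h)
        have hj : j = 1 := by
          have : ¬ (j = 0) := fun h0 => hij (fun _ => h0)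
          omega
        subst hi; subst hj
        simp [lconcat]
      · have hgv : phi c1 σ one v = 0 := ih v hl hF'
        fin_cases i <;> fin_cases j <;> simp_all [lconcat, sh, hgv, hsh]

end Paper
namespace Paper

lemma sh_c1_rshift (g : Series) (b : Fin 2) (v : Word) :
    shuffleFn c1 g (v ++ [b]) = shuffleFn c1 g v + shuffleFn c1 (fun u => g (u ++ [b])) v := by
  have h := rsh_sh c1 g b v
  simpa only [show (fun u => c1 (u ++ [b])) = c1 from rfl] using h

lemma phi_diff (ξ : Word) : ∀ w : Word,
    phi c1 ξ one (w ++ [0]) - phi c1 ξ one (w ++ [1]) =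
      if ξ.getLast? = some 0 then phi c1 ξ.dropLast one w else 0 := by
  induction ξ with
  | nil =>
    intro w
    have h0 : one (w ++ [(0:Fin 2)]) = 0 := one_ne_nil (by simp)
    have h1 : one (w ++ [(1:Fin 2)]) = 0 := one_ne_nil (by simp)
    show one (w ++ [0]) - one (w ++ [1]) = _
    simp [h0, h1]
  | cons i σ ih =>
    intro w
    set g := phi c1 σ one with hgdef
    have hD : ∀ v : Word, sh c1 g (v ++ [0]) - sh c1 g (v ++ [1])
        = shuffleFn c1 (fun u => g (u ++ [0]) - g (u ++ [1])) v := by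
      intro v
      show shuffleFn c1 g (v ++ [0]) - shuffleFn c1 g (v ++ [1]) = _
      rw [sh_c1_rshift, sh_c1_rshift]
      rw [show shuffleFn c1 g v + shuffleFn c1 (fun u => g (u ++ [0])) v
          - (shuffleFn c1 g v + shuffleFn c1 (fun u => g (u ++ [1])) v)
          = shuffleFn c1 (fun u => g (u ++ [0])) v - shuffleFn c1 (fun u => g (u ++ [1])) v
          by ring]
      rw [sh_sub]
    by_cases hends : σ.getLast? = some (0 : Fin 2)
    · have hfun : (fun u => g (u ++ [0]) - g (u ++ [1])) = phi c1 σ.dropLast one :=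
        funext fun u => by rw [ih u, if_pos hends]
      have hσne : σ ≠ [] := by rintro rfl; simp at hends
      have hlast : (i :: σ).getLast? = some (0 : Fin 2) := by
        rcases σ with _ | ⟨s, ss⟩
        · exact absurd rfl hσne
        · rw [List.getLast?_cons_cons]; exact hends
      have hdrop : (i :: σ).dropLast = i :: σ.dropLast := by
        rcases σ with _ | ⟨s, ss⟩
        · exact absurd rfl hσne
        · rfl
      rw [if_pos hlast, hdrop]
      show phiLetter c1 i g (w ++ [0]) - phiLetter c1 i g (w ++ [1])
        = phiLetter c1 i (phi c1 σ.dropLast one) w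
      unfold phiLetter
      rcases (show i = 0 ∨ i = 1 by omega) with rfl | rfl
      · -- i = 0
        simp only [if_pos rfl, if_true]
        rcases w with _ | ⟨j, v⟩
        · -- w = []
          show lconcat 0 g [0] - lconcat 0 g [1] = lconcat 0 (phi c1 σ.dropLast one) []
          have : g [] = 0 := by rw [hgdef, phi_one_nil, if_neg hσne]
          simp [lconcat, this]
        · show lconcat 0 g (j :: (v ++ [0])) - lconcat 0 g (j :: (v ++ [1]))
            = lconcat 0 (phi c1 σ.dropLast one) (j :: v)
          show (if j = 0 then g (v ++ [0]) else 0) - (if j = 0 then g (v ++ [1]) else 0)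
            = if j = 0 then phi c1 σ.dropLast one v else 0
          by_cases hj : j = 0
          · rw [if_pos hj, if_pos hj, if_pos hj, ih v, if_pos hends]
          · simp [hj]
      · -- i = 1
        simp only [if_neg (show (1:Fin 2) ≠ 0 by decide)]
        rcases w with _ | ⟨j, v⟩
        · show (lconcat 1 g [0] + lconcat 0 (sh c1 g) [0])
            - (lconcat 1 g [1] + lconcat 0 (sh c1 g) [1])
            = (lconcat 1 (phi c1 σ.dropLast one) + lconcat 0 (sh c1 (phi c1 σ.dropLast one))) []
          show (0 + sh c1 g []) - (g [] + 0) = 0 + 0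
          show (0 + c1 [] * g []) - (g [] + 0) = 0 + 0
          show (0 + 1 * g []) - (g [] + 0) = 0 + 0
          ring
        · show (lconcat 1 g (j :: (v ++ [0])) + lconcat 0 (sh c1 g) (j :: (v ++ [0])))
            - (lconcat 1 g (j :: (v ++ [1])) + lconcat 0 (sh c1 g) (j :: (v ++ [1])))
            = lconcat 1 (phi c1 σ.dropLast one) (j :: v)
              + lconcat 0 (sh c1 (phi c1 σ.dropLast one)) (j :: v)
          show ((if j = 1 then g (v ++ [0]) else 0) + (if j = 0 then sh c1 g (v ++ [0]) else 0))
            - ((if j = 1 then g (v ++ [1]) else 0) + (if j = 0 then sh c1 g (v ++ [1]) else 0))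
            = (if j = 1 then phi c1 σ.dropLast one v else 0)
              + (if j = 0 then sh c1 (phi c1 σ.dropLast one) v else 0)
          rcases (show j = 0 ∨ j = 1 by omega) with rfl | rfl
          · show (0 + sh c1 g (v ++ [0])) - (0 + sh c1 g (v ++ [1]))
              = 0 + sh c1 (phi c1 σ.dropLast one) v
            rw [show (0 + sh c1 g (v ++ [0])) - (0 + sh c1 g (v ++ [1]))
                = sh c1 g (v ++ [0]) - sh c1 g (v ++ [1]) by ring, hD v, hfun]
            show shuffleFn c1 (phi c1 σ.dropLast one) v
              = 0 + shuffleFn c1 (phi c1 σ.dropLast one) v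
            ring
          · show (g (v ++ [0]) + 0) - (g (v ++ [1]) + 0) = phi c1 σ.dropLast one v + 0
            rw [show (g (v ++ [0]) + 0) - (g (v ++ [1]) + 0)
                = g (v ++ [0]) - g (v ++ [1]) by ring, ih v, if_pos hends]
            ring
    · have hfun : (fun u => g (u ++ [0]) - g (u ++ [1])) = (fun _ => (0:ℝ)) :=
        funext fun u => by rw [ih u, if_neg hends]
      have hzero : ∀ v, shuffleFn c1 (fun u => g (u ++ [0]) - g (u ++ [1])) v = 0 := by
        intro v; rw [hfun]; exact sh_zero c1 v
      -- RHS
      rcases σ with _ | ⟨s, ss⟩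
      · -- σ = [] : g = one
        have hg : g = one := rfl
        show phiLetter c1 i one (w ++ [0]) - phiLetter c1 i one (w ++ [1])
          = if [i].getLast? = some 0 then phi c1 [i].dropLast one w else 0
        have hlast : ([i] : Word).getLast? = some i := rfl
        unfold phiLetter
        rcases (show i = 0 ∨ i = 1 by omega) with rfl | rfl
        · -- ξ = [0] : RHS = one w
          simp only [if_pos rfl, hlast]
          rcases w with _ | ⟨j, v⟩
          · show lconcat 0 one [0] - lconcat 0 one [1] = phi c1 [] one []
            show one [] - 0 = one []
            ring
          · show (if j = 0 then one (v ++ [0]) else 0) - (if j = 0 then one (v ++ [1]) else 0)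
              = one (j :: v)
            have e0 : one (v ++ [(0:Fin 2)]) = 0 := one_ne_nil (by simp)
            have e1 : one (v ++ [(1:Fin 2)]) = 0 := one_ne_nil (by simp)
            have e2 : one (j :: v) = 0 := one_ne_nil (by simp)
            simp [e0, e1, e2]
        · -- ξ = [1] : RHS = 0
          simp only [if_neg (show (1:Fin 2) ≠ 0 by decide),
            if_neg (show some (1:Fin 2) ≠ some 0 by decide), hlast]
          rcases w with _ | ⟨j, v⟩
          · show (0 + sh c1 one []) - (one [] + 0) = 0
            show (0 + c1 [] * one []) - (one [] + 0) = 0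
            show (0 + 1 * one []) - (one [] + 0) = 0
            ring
          · show ((if j = 1 then one (v ++ [0]) else 0) + (if j = 0 then sh c1 one (v ++ [0]) else 0))
              - ((if j = 1 then one (v ++ [1]) else 0) + (if j = 0 then sh c1 one (v ++ [1]) else 0))
              = 0
            have hDv := hD v
            rw [hg] at *
            rcases (show j = 0 ∨ j = 1 by omega) with rfl | rfl
            · show (0 + sh c1 one (v ++ [0])) - (0 + sh c1 one (v ++ [1])) = 0
              rw [show (0 + sh c1 one (v ++ [0])) - (0 + sh c1 one (v ++ [1]))
                  = sh c1 one (v ++ [0]) - sh c1 one (v ++ [1]) by ring, hDv]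
              have hone : (fun u : Word => one (u ++ [0]) - one (u ++ [1])) = fun _ => (0:ℝ) :=
                funext fun u => by
                  rw [one_ne_nil (show u ++ [(0:Fin 2)] ≠ [] by simp),
                    one_ne_nil (show u ++ [(1:Fin 2)] ≠ [] by simp)]; ring
              rw [hone]; exact sh_zero c1 v
            · show (one (v ++ [0]) + 0) - (one (v ++ [1]) + 0) = 0
              have e0 : one (v ++ [(0:Fin 2)]) = 0 := one_ne_nil (by simp)
              have e1 : one (v ++ [(1:Fin 2)]) = 0 := one_ne_nil (by simp)
              rw [e0, e1]; ring
      · -- σ = s :: ss nonempty, not ending in 0 : RHS = 0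
        have hlast : (i :: s :: ss).getLast? = (s :: ss).getLast? := List.getLast?_cons_cons ..
        rw [if_neg (by rw [hlast]; exact hends)]
        show phiLetter c1 i g (w ++ [0]) - phiLetter c1 i g (w ++ [1]) = 0
        unfold phiLetter
        have hgnil : g [] = 0 := by
          rw [hgdef, phi_one_nil, if_neg (by simp)]
        rcases (show i = 0 ∨ i = 1 by omega) with rfl | rfl
        · simp only [if_pos rfl, if_true]
          rcases w with _ | ⟨j, v⟩
          · show lconcat 0 g [0] - lconcat 0 g [1] = 0
            show g [] - 0 = 0
            rw [hgnil]; ring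
          · show (if j = 0 then g (v ++ [0]) else 0) - (if j = 0 then g (v ++ [1]) else 0) = 0
            by_cases hj : j = 0
            · rw [if_pos hj, if_pos hj, ih v, if_neg hends]
            · simp [hj]
        · simp only [if_neg (show (1:Fin 2) ≠ 0 by decide)]
          rcases w with _ | ⟨j, v⟩
          · show (0 + sh c1 g []) - (g [] + 0) = 0
            show (0 + c1 [] * g []) - (g [] + 0) = 0
            show (0 + 1 * g []) - (g [] + 0) = 0
            ring
          · show ((if j = 1 then g (v ++ [0]) else 0) + (if j = 0 then sh c1 g (v ++ [0]) else 0))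
              - ((if j = 1 then g (v ++ [1]) else 0) + (if j = 0 then sh c1 g (v ++ [1]) else 0))
              = 0
            rcases (show j = 0 ∨ j = 1 by omega) with rfl | rfl
            · show (0 + sh c1 g (v ++ [0])) - (0 + sh c1 g (v ++ [1])) = 0
              rw [show (0 + sh c1 g (v ++ [0])) - (0 + sh c1 g (v ++ [1]))
                  = sh c1 g (v ++ [0]) - sh c1 g (v ++ [1]) by ring, hD v, hzero v]
            · show (g (v ++ [0]) + 0) - (g (v ++ [1]) + 0) = 0
              rw [show (g (v ++ [0]) + 0) - (g (v ++ [1]) + 0)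
                  = g (v ++ [0]) - g (v ++ [1]) by ring, ih v, if_neg hends]

end Paper
namespace Paper

lemma mem_wordsLen {ξ : Word} {k : ℕ} : ξ ∈ wordsLen k ↔ ξ.length = k := by
  constructor
  · intro h
    rcases Finset.mem_image.mp h with ⟨f, _, rfl⟩
    simp
  · intro h
    subst h
    exact Finset.mem_image.mpr ⟨ξ.get, Finset.mem_univ _, List.ofFn_get ξ⟩

/-- Words of length at most `n`. -/
def sW (n : ℕ) : Finset Word := (Finset.range (n+1)).biUnion wordsLen

lemma mem_sW {ξ : Word} {n : ℕ} : ξ ∈ sW n ↔ ξ.length ≤ n := by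
  simp only [sW, Finset.mem_biUnion, Finset.mem_range, mem_wordsLen]
  constructor
  · rintro ⟨k, hk, rfl⟩; omega
  · intro h; exact ⟨ξ.length, by omega, rfl⟩

lemma mcomp_eq_sum (d c : Series) (w : Word) :
    mcomp d c w = ∑ ξ ∈ sW w.length, d ξ * phi c ξ one w := by
  apply tsum_eq_sum
  intro b hb
  have hlen : w.length < b.length := by
    by_contra h
    exact hb (mem_sW.mpr (by omega))
  rw [phi_one_vanish c b w hlen]
  ring

lemma evalS_eq_eval (d : Series) (p : H) : evalS d p = MvPolynomial.eval d p := by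
  rw [evalS, MvPolynomial.aeval_def, MvPolynomial.eval, MvPolynomial.coe_eval₂Hom]
  congr 1

lemma forall2_count_lt : ∀ {ξ w : Word}, List.Forall₂ rel01 ξ w → ξ ≠ w →
    List.count 0 ξ < List.count 0 w := by
  intro ξ w h
  induction h with
  | nil => intro h; exact absurd rfl h
  | @cons a b l l' hab htail ih =>
    intro hne
    by_cases hlw : l = l'
    · subst hlw
      have hab2 : a ≠ b := fun h => hne (by rw [h])
      have ha : a = 1 := by
        by_contra h
        have ha0 : a = 0 := by omega
        exact hab2 (by rw [ha0, hab ha0])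
      have hb : b = 0 := by omega
      subst ha; subst hb
      simp [List.count_cons]
    · have h1 := ih hlw
      rcases (show a = 0 ∨ a = 1 by omega) with rfl|rfl <;>
        rcases (show b = 0 ∨ b = 1 by omega) with rfl|rfl <;>
          simp_all [List.count_cons, rel01] <;> omega

end Paper
open Paper in
/-- Let `c ∈ ℝ⟨⟨X⟩⟩` be the series with `⟨c, ξ⟩ = 1` for every word
`ξ ∈ X*`.  Then for every word `η ∈ X*`, the antipode of the output feedback Hopf algebra
satisfies `(S a_{η x0})(c) = 0`; equivalently, the coefficients of the antipode polynomial
`S a_{η x0}` sum to zero. -/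
theorem antipode_coefficients_sum_zero
    (Δ : H →ₐ[ℝ] (H ⊗[ℝ] H)) (hΔ : IsFBCoproduct Δ)
    (S : H →ₗ[ℝ] H) (hS : IsAntipode Δ S) :
    ∀ η : Word, evalS (fun _ => 1) (S (aw (η ++ [0]))) = 0 := by
  classical
  have S1 : S (1 : H) = 1 := by
    have h := hS.1 1
    rw [map_one Δ, Algebra.TensorProduct.one_def, TensorProduct.map_tmul,
      LinearMap.mul'_apply, LinearMap.id_apply, mul_one,
      show counit 1 = 1 from map_one counit, one_smul] at h
    exact h
  set R : H ⊗[ℝ] H →ₗ[ℝ] H :=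
    (TensorProduct.rid ℝ H).toLinearMap ∘ₗ
      TensorProduct.map LinearMap.id (evalS c1).toLinearMap with hRdef
  have hRtmul : ∀ (x y : H), R (x ⊗ₜ[ℝ] y) = evalS c1 y • x := by
    intro x y
    simp [hRdef, TensorProduct.rid_tmul]
  have key1 : ∀ p : H, evalS c1 (S (R (Δ p))) = counit p := by
    intro p
    have hmaps : (evalS c1).toLinearMap ∘ₗ (LinearMap.mul' ℝ H) ∘ₗ
        TensorProduct.map S LinearMap.id = (evalS c1).toLinearMap ∘ₗ S ∘ₗ R := by
      apply TensorProduct.ext'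
      intro x y
      simp only [LinearMap.coe_comp, Function.comp_apply, TensorProduct.map_tmul,
        LinearMap.id_apply, LinearMap.mul'_apply, AlgHom.toLinearMap_apply, hRtmul,
        map_smul, map_mul, smul_eq_mul]
      ring
    have h1 := LinearMap.congr_fun hmaps (Δ p)
    simp only [LinearMap.coe_comp, Function.comp_apply, AlgHom.toLinearMap_apply] at h1
    rw [← h1, hS.1 p, map_smul, map_one, smul_eq_mul, mul_one]
  have qval : ∀ (w : Word) (d : Series), evalS d (R (Δ (aw w))) = mcomp d c1 w + 1 := by
    intro w d
    have hmaps2 : (evalS d).toLinearMap ∘ₗ R = evalPair d c1 := by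
      apply TensorProduct.ext'
      intro x y
      simp only [LinearMap.coe_comp, Function.comp_apply, AlgHom.toLinearMap_apply, hRtmul,
        map_smul, smul_eq_mul, evalPair, TensorProduct.map_tmul, LinearMap.mul'_apply]
      ring
    have h1 := LinearMap.congr_fun hmaps2 (Δ (aw w))
    simp only [LinearMap.coe_comp, Function.comp_apply, AlgHom.toLinearMap_apply] at h1
    rw [h1, hΔ w d c1]
    norm_num [c1]
  have qpoly : ∀ w : Word, R (Δ (aw w))
      = (1 : H) + ∑ ξ ∈ sW w.length, phi c1 ξ one w • aw ξ := by
    intro w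
    apply MvPolynomial.funext
    intro x
    rw [← evalS_eq_eval, ← evalS_eq_eval, qval w x, mcomp_eq_sum, map_add, map_one, map_sum]
    simp only [map_smul, smul_eq_mul, aw, MvPolynomial.aeval_X, evalS]
    rw [add_comm]
    congr 1
    apply Finset.sum_congr rfl
    intro ξ _
    ring
  set eS : Series := fun ξ => evalS c1 (S (aw ξ)) with heSdef
  have Eq1 : ∀ w : Word, ∑ ξ ∈ sW w.length, phi c1 ξ one w * eS ξ = -1 := by
    intro w
    have h := key1 (aw w)
    rw [qpoly w, map_add, map_sum, S1] at h
    simp only [map_smul] at h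
    rw [map_add, map_one, map_sum] at h
    simp only [map_smul, smul_eq_mul] at h
    have hc : counit (aw w) = 0 := by
      simp [counit, aw, evalS]
    rw [hc] at h
    have h2 : (1:ℝ) + ∑ ξ ∈ sW w.length, phi c1 ξ one w * eS ξ = 0 := h
    linarith
  have Eq2 : ∀ w : Word, ∑ σ ∈ sW w.length, phi c1 σ one w * eS (σ ++ [0]) = 0 := by
    intro w
    have h0 := Eq1 (w ++ [0])
    have h1 := Eq1 (w ++ [1])
    rw [show (w ++ [(0:Fin 2)]).length = w.length + 1 by simp] at h0
    rw [show (w ++ [(1:Fin 2)]).length = w.length + 1 by simp] at h1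
    have hsub2 : ∑ ξ ∈ sW (w.length+1),
        (if ξ.getLast? = some 0 then phi c1 ξ.dropLast one w else 0) * eS ξ = 0 := by
      have hsub : ∑ ξ ∈ sW (w.length+1),
          (phi c1 ξ one (w++[0]) - phi c1 ξ one (w++[1])) * eS ξ = 0 := by
        simp only [sub_mul]
        rw [Finset.sum_sub_distrib, h0, h1]
        ring
      refine Eq.trans ?_ hsub
      apply Finset.sum_congr rfl
      intro ξ _
      rw [phi_diff]
    set T := (sW w.length).image (fun σ : Word => σ ++ [(0:Fin 2)]) with hT
    have hTsub : T ⊆ sW (w.length+1) := by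
      intro ξ hξ
      rcases Finset.mem_image.mp hξ with ⟨σ, hσ, rfl⟩
      have := mem_sW.mp hσ
      exact mem_sW.mpr (by simp; omega)
    have hzero : ∀ ξ ∈ sW (w.length+1), ξ ∉ T →
        (if ξ.getLast? = some 0 then phi c1 ξ.dropLast one w else 0) * eS ξ = 0 := by
      intro ξ hξ hξT
      by_cases hlast : ξ.getLast? = some (0:Fin 2)
      · exfalso
        have hne : ξ ≠ [] := by rintro rfl; simp at hlast
        have hlast2 : ξ.getLast hne = 0 := by
          rw [List.getLast?_eq_getLast hne] at hlast
          exact Option.some.inj hlast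
        have hξeq : ξ.dropLast ++ [(0:Fin 2)] = ξ := by
          rw [← hlast2]; exact List.dropLast_append_getLast hne
        apply hξT
        apply Finset.mem_image.mpr
        refine ⟨ξ.dropLast, ?_, hξeq⟩
        have h3 := mem_sW.mp hξ
        apply mem_sW.mpr
        have h4 : ξ.dropLast.length = ξ.length - 1 := List.length_dropLast
        have h5 : ξ.length ≠ 0 := fun hl => hne (List.length_eq_zero_iff.mp hl)
        omega
      · rw [if_neg hlast]; ring
    rw [← Finset.sum_subset hTsub hzero] at hsub2
    rw [hT, Finset.sum_image (by
      intro x _ y _ hxy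
      simpa using hxy)] at hsub2
    refine Eq.trans ?_ hsub2
    apply Finset.sum_congr rfl
    intro σ _
    rw [List.getLast?_concat, if_pos rfl, List.dropLast_concat]
  have main : ∀ n : ℕ, ∀ w : Word,
      w.length * w.length + List.count 0 w < n → eS (w ++ [0]) = 0 := by
    intro n
    induction n with
    | zero => intro w h; omega
    | succ n ih =>
      intro w hw
      have h := Eq2 w
      have hwmem : w ∈ sW w.length := mem_sW.mpr le_rfl
      rw [← Finset.add_sum_erase _ _ hwmem] at h
      have hFww : phi c1 w one w = 1 :=
        phi_len_one w w rfl (List.forall₂_same.mpr fun a _ h0 => h0)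
      have hrest : ∀ σ ∈ (sW w.length).erase w, phi c1 σ one w * eS (σ ++ [0]) = 0 := by
        intro σ hσ
        have hσne : σ ≠ w := Finset.ne_of_mem_erase hσ
        have hσlen : σ.length ≤ w.length := mem_sW.mp (Finset.mem_of_mem_erase hσ)
        by_cases hlen : σ.length = w.length
        · by_cases hF : List.Forall₂ rel01 σ w
          · have hcnt : List.count 0 σ < List.count 0 w := forall2_count_lt hF hσne
            have hz : eS (σ ++ [0]) = 0 := by
              apply ih σ
              have : σ.length * σ.length = w.length * w.length := by rw [hlen]
              omega
            rw [hz]; ring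
          · rw [phi_len_zero σ w hlen hF]; ring
        · have hlt : σ.length < w.length := by omega
          have hz : eS (σ ++ [0]) = 0 := by
            apply ih σ
            have h1 : List.count 0 σ ≤ σ.length := List.count_le_length
            have h2 : σ.length * σ.length + σ.length + 1 ≤ w.length * w.length := by
              nlinarith
            omega
          rw [hz]; ring
      rw [Finset.sum_eq_zero hrest, hFww, add_zero, one_mul] at h
      exact h
  intro η
  exact main (η.length * η.length + List.count 0 η + 1) η (by omega)
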